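/- Let λ ∈ (1/2, 1) be such that β = 1/λ is an algebraic integer of norm ±2 all of whose Galois conjugates have modulus strictly greater than 1 (a Garsia number). Then there exists C > 0 such that for any n and any two distinct words a, a' ∈ {0,1}^n, |∑_{i=1}^n a_i λ^{i−1} − ∑_{i=1}^n a'_i λ^{i−1}| ≥ C/2^n. -/

import Mathlib

open Polynomial IntermediateField

/-- A nonzero polynomial with coefficients in `{-1,0,1}` cannot be divisible by a polynomial
whose constant coefficient has absolute value 2. -/
lemma garsia_not_dvd {P R : Polynomial ℤ} (hP : |P.coeff 0| = 2) (hR : R ≠ 0)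
    (hcoef : ∀ k, |R.coeff k| ≤ 1) : ¬ P ∣ R := by
  rintro ⟨S, rfl⟩
  have hP0 : P.coeff 0 ≠ 0 := by intro h; rw [h] at hP; simp at hP
  have hPt : P.natTrailingDegree = 0 := natTrailingDegree_eq_zero.2 (Or.inr hP0)
  have hS : S ≠ 0 := by rintro rfl; exact hR (mul_zero P)
  have h1 : (P * S).trailingCoeff = P.trailingCoeff * S.trailingCoeff := trailingCoeff_mul P S
  have h2 : |(P * S).trailingCoeff| ≤ 1 := hcoef _
  have hPtc : P.trailingCoeff = P.coeff 0 := by rw [Polynomial.trailingCoeff, hPt]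
  have hs1 : 1 ≤ |S.trailingCoeff| := Int.one_le_abs (mt Polynomial.trailingCoeff_eq_zero.1 hS)
  rw [h1, hPtc, abs_mul, hP] at h2
  omega

set_option maxHeartbeats 1000000 in
theorem stmt_7 (lam : ℝ) (hlam : lam ∈ Set.Ioo (1 / 2 : ℝ) 1)
    (hint : IsIntegral ℤ (1 / lam))
    (hnorm : |(minpoly ℤ (1 / lam)).coeff 0| = 2)
    (hconj : ∀ z : ℂ, Polynomial.aeval z (minpoly ℤ (1 / lam)) = 0 → 1 < ‖z‖) :
    ∃ C > (0 : ℝ), ∀ n : ℕ, ∀ a a' : Fin n → ℝ,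
      (∀ i, a i = 0 ∨ a i = 1) → (∀ i, a' i = 0 ∨ a' i = 1) → a ≠ a' →
      C / 2 ^ n ≤ |(∑ i : Fin n, a i * lam ^ (i : ℕ)) - ∑ i : Fin n, a' i * lam ^ (i : ℕ)| := by
  classical
  obtain ⟨hl2, hl1⟩ := hlam
  have hl0 : 0 < lam := lt_trans (by norm_num) hl2
  set β : ℝ := 1 / lam with hβ
  have hβ1 : 1 < β := one_lt_one_div hl0 hl1
  have hβ0 : 0 < β := by positivity
  -- the field K = ℚ(β)
  have hintQ : IsIntegral ℚ β := hint.tower_top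
  set K := ℚ⟮β⟯ with hK
  haveI : FiniteDimensional ℚ K := IntermediateField.adjoin.finiteDimensional hintQ
  set g : K := AdjoinSimple.gen ℚ β with hg
  have hmap : algebraMap K ℝ g = β := AdjoinSimple.algebraMap_gen ℚ β
  have hinj : Function.Injective (algebraMap K ℝ) := (algebraMap K ℝ).injective
  have hgint : IsIntegral ℤ g := by
    rw [← isIntegral_algebraMap_iff hinj, hmap]; exact hint
  have hminZ : minpoly ℤ g = minpoly ℤ β := by
    conv_rhs => rw [← hmap]
    rw [minpoly.algebraMap_eq hinj]
  have hminQ : minpoly ℚ g = (minpoly ℤ β).map (algebraMap ℤ ℚ) := by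
    rw [← hminZ]
    exact minpoly.isIntegrallyClosed_eq_field_fractions' ℚ hgint
  -- embeddings of K into ℂ
  let φ0 : K →ₐ[ℚ] ℂ := (Complex.ofRealAm.restrictScalars ℚ).comp K.val
  haveI : Nonempty (K →ₐ[ℚ] ℂ) := ⟨φ0⟩
  have hroot : ∀ φ : K →ₐ[ℚ] ℂ, 1 < ‖φ g‖ := by
    intro φ
    apply hconj
    have h1 : Polynomial.aeval g (minpoly ℚ g) = 0 := minpoly.aeval ℚ g
    have h2 : Polynomial.aeval (φ g) (minpoly ℚ g) = 0 := by
      rw [Polynomial.aeval_algHom_apply φ g (minpoly ℚ g), h1, map_zero]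
    rwa [hminQ, Polynomial.aeval_map_algebraMap] at h2
  have hφaeval : ∀ (φ : K →ₐ[ℚ] ℂ) (Q : Polynomial ℤ),
      φ (Polynomial.aeval g Q) = Polynomial.aeval (φ g) Q := by
    intro φ Q
    have := Polynomial.aeval_algHom_apply (φ.restrictScalars ℤ) g Q
    simpa using this.symm
  -- norm-product formula
  have key : ∀ y : K, ∏ φ : K →ₐ[ℚ] ℂ, ‖φ y‖ = |((Algebra.norm ℚ y : ℚ) : ℝ)| := by
    intro y
    have h := Algebra.norm_eq_prod_embeddings ℚ ℂ y
    have h2 := congrArg (‖·‖) h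
    rw [norm_prod] at h2
    rw [← h2, eq_ratCast (algebraMap ℚ ℂ)]
    rw [show ((Algebra.norm ℚ y : ℚ) : ℂ) = (((Algebra.norm ℚ y : ℚ) : ℝ) : ℂ) by push_cast; ring]
    rw [Complex.norm_real, Real.norm_eq_abs]
  -- |Norm g| = 2
  have hnormg : |((Algebra.norm ℚ g : ℚ) : ℝ)| = 2 := by
    have pbg : (IntermediateField.adjoin.powerBasis hintQ).gen = g := rfl
    have h := Algebra.PowerBasis.norm_gen_eq_coeff_zero_minpoly (IntermediateField.adjoin.powerBasis hintQ)
    rw [pbg] at h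
    erw [hminQ] at h
    rw [show Algebra.norm ℚ g = _ from h, Polynomial.coeff_map]
    rw [show ∀ q : ℚ, |(((-1 : ℚ) ^ (IntermediateField.adjoin.powerBasis hintQ).dim * q : ℚ) : ℝ)|
        = |(q : ℝ)| from fun q => by
      push_cast
      rw [abs_mul, abs_pow, abs_neg, abs_one, one_pow, one_mul]]
    rw [eq_intCast (algebraMap ℤ ℚ) ((minpoly ℤ β).coeff 0)]
    rw [show ((((minpoly ℤ β).coeff 0 : ℤ) : ℚ) : ℝ) = (((minpoly ℤ β).coeff 0 : ℤ) : ℝ) by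
      norm_cast]
    rw [← Int.cast_abs, hnorm]
    norm_num
  have hprodg : ∏ φ : K →ₐ[ℚ] ℂ, ‖φ g‖ = 2 := by rw [key g, hnormg]
  -- the constant
  set d := Fintype.card (K →ₐ[ℚ] ℂ) with hd
  set m : ℝ := Finset.univ.inf' Finset.univ_nonempty
      (fun φ : K →ₐ[ℚ] ℂ => ‖φ g‖ - 1) with hm
  have hm0 : 0 < m := by
    rw [hm, Finset.lt_inf'_iff]
    intro φ _
    linarith [hroot φ]
  set c : ℝ := min m 1 with hc
  have hc0 : 0 < c := lt_min hm0 one_pos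
  have hc1 : c ≤ 1 := min_le_right _ _
  have hcd : 0 < c ^ d := pow_pos hc0 d
  refine ⟨c ^ d, hcd, ?_⟩
  intro n a a' ha ha' hne
  -- integer coefficients
  set b : ℕ → ℤ := fun k =>
    if h : k < n then (if a ⟨k, h⟩ = 1 then 1 else 0) - (if a' ⟨k, h⟩ = 1 then 1 else 0)
    else 0 with hb
  have hcast : ∀ i : Fin n, (b i : ℝ) = a i - a' i := by
    intro i
    rw [hb]
    simp only [i.isLt, dif_pos, Fin.eta]
    rcases ha i with h1 | h1 <;> rcases ha' i with h2 | h2 <;> simp [h1, h2] <;> norm_num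
  have hbabs : ∀ k, |b k| ≤ 1 := by
    intro k
    rw [hb]
    dsimp only
    split
    · split_ifs <;> simp
    · simp
  obtain ⟨i, hi⟩ := Function.ne_iff.1 hne
  have hbi : b i ≠ 0 := by
    intro h0
    apply hi
    have h := hcast i
    rw [h0, Int.cast_zero] at h
    linarith [h.symm]
  have hn0 : 0 < n := i.pos
  -- the reversed polynomial
  set R : Polynomial ℤ := ∑ k ∈ Finset.range n, Polynomial.C (b (n - 1 - k)) * Polynomial.X ^ k
    with hR
  have hcoeff : ∀ k, R.coeff k = if k < n then b (n - 1 - k) else 0 := by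
    intro k
    rw [hR, Polynomial.finset_sum_coeff]
    simp only [Polynomial.coeff_C_mul, Polynomial.coeff_X_pow, mul_ite, mul_one, mul_zero]
    rw [Finset.sum_ite_eq (Finset.range n) k fun j => b (n - 1 - j)]
    simp [Finset.mem_range]
  have hRabs : ∀ k, |R.coeff k| ≤ 1 := by
    intro k
    rw [hcoeff]
    split
    · exact hbabs _
    · simp
  have hR0 : R ≠ 0 := by
    intro h
    have h2 := hcoeff (n - 1 - (i : ℕ))
    rw [h, Polynomial.coeff_zero] at h2
    rw [if_pos (by omega : n - 1 - (i : ℕ) < n)] at h2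
    rw [show n - 1 - (n - 1 - (i : ℕ)) = (i : ℕ) by omega] at h2
    exact hbi h2.symm
  have hndvd : ¬ minpoly ℤ g ∣ R :=
    garsia_not_dvd (by rw [hminZ]; exact hnorm) hR0 hRabs
  set x : K := Polynomial.aeval g R with hx
  have hval : x ≠ 0 := by
    intro h0
    apply hndvd
    have hdvd : minpoly ℚ g ∣ R.map (algebraMap ℤ ℚ) :=
      minpoly.dvd ℚ g (by rw [Polynomial.aeval_map_algebraMap]; exact h0)
    rw [hminQ, ← hminZ] at hdvd
    exact (Polynomial.map_dvd_map (algebraMap ℤ ℚ) (algebraMap ℤ ℚ).injective_int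
      (minpoly.monic hgint)).1 hdvd
  have hxint : IsIntegral ℤ x := by
    have hmem : x ∈ Algebra.adjoin ℤ ({g} : Set K) := by
      rw [Algebra.adjoin_singleton_eq_range_aeval]
      exact ⟨R, rfl⟩
    have hmem2 : x ∈ integralClosure ℤ K := by
      refine Algebra.adjoin_le ?_ hmem
      rintro y hy
      rw [Set.mem_singleton_iff] at hy
      subst hy
      exact hgint
    exact hmem2
  have hNne : Algebra.norm ℚ x ≠ 0 := by
    rw [Algebra.norm_ne_zero_iff]
    exact hval
  have hNint : IsIntegral ℤ (Algebra.norm ℚ x) := Algebra.isIntegral_norm ℚ hxint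
  obtain ⟨z, hz⟩ := IsIntegrallyClosed.isIntegral_iff.1 hNint
  have hz0 : z ≠ 0 := by rintro rfl; rw [map_zero] at hz; exact hNne hz.symm
  have h1N : (1 : ℝ) ≤ ∏ φ : K →ₐ[ℚ] ℂ, ‖φ x‖ := by
    rw [key x, ← hz]
    rw [eq_intCast (algebraMap ℤ ℚ) z]
    rw [show (((z : ℚ)) : ℝ) = (z : ℝ) by push_cast; ring]
    exact_mod_cast Int.one_le_abs hz0
  -- per-embedding upper bound
  have habs0 : ∀ φ : K →ₐ[ℚ] ℂ, (0 : ℝ) ≤ ‖φ x‖ := fun φ => norm_nonneg _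
  have hbound : ∀ φ : K →ₐ[ℚ] ℂ, ‖φ x‖ ≤
      ‖φ g‖ ^ n / (‖φ g‖ - 1) := by
    intro φ
    have hr := hroot φ
    have hφx : φ x = ∑ k ∈ Finset.range n, ((b (n - 1 - k) : ℤ) : ℂ) * φ g ^ k := by
      rw [hx, hφaeval φ R, hR]
      simp only [map_sum, map_mul, map_pow, Polynomial.aeval_C, Polynomial.aeval_X, eq_intCast, map_intCast]
    rw [hφx]
    calc ‖∑ k ∈ Finset.range n, ((b (n - 1 - k) : ℤ) : ℂ) * φ g ^ k‖
        ≤ ∑ k ∈ Finset.range n, ‖((b (n - 1 - k) : ℤ) : ℂ) * φ g ^ k‖ :=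
          norm_sum_le _ _
      _ ≤ ∑ k ∈ Finset.range n, ‖φ g‖ ^ k := by
          apply Finset.sum_le_sum
          intro k _
          rw [norm_mul, norm_pow]
          have h1 : ‖((b (n - 1 - k) : ℤ) : ℂ)‖ ≤ 1 := by
            rw [Complex.norm_intCast]
            exact_mod_cast hbabs _
          have h2 : (0 : ℝ) ≤ ‖φ g‖ ^ k := by positivity
          calc ‖((b (n - 1 - k) : ℤ) : ℂ)‖ * ‖φ g‖ ^ k
              ≤ 1 * ‖φ g‖ ^ k := mul_le_mul_of_nonneg_right h1 h2
            _ = ‖φ g‖ ^ k := one_mul _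
      _ ≤ ‖φ g‖ ^ n / (‖φ g‖ - 1) := by
          rw [le_div_iff₀ (by linarith), geom_sum_mul]
          linarith
  -- evaluating φ0
  have hφ0y : ∀ y : K, φ0 y = ((algebraMap K ℝ y : ℝ) : ℂ) := fun y => rfl
  have hφ0g : ‖φ0 g‖ = β := by
    rw [hφ0y, hmap, Complex.norm_real, Real.norm_eq_abs, abs_of_pos hβ0]
  have hprodgs : ∏ φ ∈ Finset.univ.erase φ0, ‖φ g‖ = 2 * lam := by
    have hsplitg := Finset.mul_prod_erase Finset.univ
      (fun φ : K →ₐ[ℚ] ℂ => ‖φ g‖) (Finset.mem_univ φ0)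
    rw [hprodg] at hsplitg
    beta_reduce at hsplitg
    rw [hφ0g, hβ] at hsplitg
    field_simp at hsplitg
    linarith
  have hlow : c ^ d ≤ ∏ φ ∈ Finset.univ.erase φ0, (‖φ g‖ - 1) := by
    have h1 : c ^ d ≤ c ^ (Finset.univ.erase φ0).card :=
      pow_le_pow_of_le_one hc0.le hc1 (by
        rw [Finset.card_erase_of_mem (Finset.mem_univ _), Finset.card_univ, ← hd]; omega)
    refine h1.trans ?_
    rw [← Finset.prod_const]
    apply Finset.prod_le_prod (fun _ _ => hc0.le)
    intro φ _
    have h2 : m ≤ ‖φ g‖ - 1 := by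
      rw [hm]
      exact Finset.inf'_le (fun ψ : K →ₐ[ℚ] ℂ => ‖ψ g‖ - 1) (Finset.mem_univ φ)
    have h3 : c ≤ m := by rw [hc]; exact min_le_left _ _
    linarith
  have hupper : ∏ φ ∈ Finset.univ.erase φ0, ‖φ x‖ ≤ (2 * lam) ^ n / c ^ d := by
    calc ∏ φ ∈ Finset.univ.erase φ0, ‖φ x‖
        ≤ ∏ φ ∈ Finset.univ.erase φ0,
            (‖φ g‖ ^ n / (‖φ g‖ - 1)) :=
          Finset.prod_le_prod (fun φ _ => habs0 φ) (fun φ _ => hbound φ)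
      _ = (∏ φ ∈ Finset.univ.erase φ0, ‖φ g‖) ^ n /
            ∏ φ ∈ Finset.univ.erase φ0, (‖φ g‖ - 1) := by
          rw [Finset.prod_div_distrib, Finset.prod_pow]
      _ ≤ (2 * lam) ^ n / c ^ d := by
          rw [hprodgs]
          exact div_le_div_of_nonneg_left (by positivity) hcd hlow
  have hφ0x : c ^ d / (2 * lam) ^ n ≤ ‖φ0 x‖ := by
    have hsplit := Finset.mul_prod_erase Finset.univ
      (fun φ : K →ₐ[ℚ] ℂ => ‖φ x‖) (Finset.mem_univ φ0)
    rw [← hsplit] at h1N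
    beta_reduce at h1N
    have h2 : (1 : ℝ) ≤ ‖φ0 x‖ * ((2 * lam) ^ n / c ^ d) :=
      h1N.trans (mul_le_mul_of_nonneg_left hupper (habs0 φ0))
    have h2l : (0 : ℝ) < (2 * lam) ^ n := by positivity
    rw [div_le_iff₀ h2l]
    calc c ^ d = c ^ d * 1 := (mul_one _).symm
      _ ≤ c ^ d * (‖φ0 x‖ * ((2 * lam) ^ n / c ^ d)) :=
          mul_le_mul_of_nonneg_left h2 hcd.le
      _ = ‖φ0 x‖ * (2 * lam) ^ n := by field_simp
  -- back to the real numbers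
  have hvalR : algebraMap K ℝ x = Polynomial.aeval β R := by
    rw [hx]
    have h := Polynomial.aeval_algHom_apply (IsScalarTower.toAlgHom ℤ K ℝ) g R
    simp only [IsScalarTower.coe_toAlgHom'] at h
    rw [← h, hmap]
  have hφ0xval : ‖φ0 x‖ = |Polynomial.aeval β R| := by
    rw [hφ0y, Complex.norm_real, Real.norm_eq_abs, hvalR]
  have hexp : Polynomial.aeval β R = ∑ k ∈ Finset.range n, ((b (n - 1 - k) : ℤ) : ℝ) * β ^ k := by
    rw [hR]
    simp only [map_sum, map_mul, map_pow, Polynomial.aeval_C, Polynomial.aeval_X, eq_intCast, map_intCast]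
  have hterm : ∀ k ∈ Finset.range n, β ^ k * lam ^ (n - 1) = lam ^ (n - 1 - k) := by
    intro k hk
    rw [Finset.mem_range] at hk
    rw [hβ, div_pow, one_pow]
    rw [show lam ^ (n - 1) = lam ^ (n - 1 - k) * lam ^ k by rw [← pow_add]; congr 1; omega]
    field_simp
  have hD : lam ^ (n - 1) * Polynomial.aeval β R
      = ∑ k ∈ Finset.range n, ((b k : ℤ) : ℝ) * lam ^ k := by
    rw [hexp, Finset.mul_sum]
    rw [← Finset.sum_range_reflect (fun k => ((b k : ℤ) : ℝ) * lam ^ k) n]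
    apply Finset.sum_congr rfl
    intro k hk
    rw [← hterm k hk]
    ring
  have hgoal_eq : (∑ i : Fin n, a i * lam ^ (i : ℕ)) - ∑ i : Fin n, a' i * lam ^ (i : ℕ)
      = ∑ k ∈ Finset.range n, ((b k : ℤ) : ℝ) * lam ^ k := by
    rw [← Finset.sum_sub_distrib]
    rw [← Fin.sum_univ_eq_sum_range (fun k => ((b k : ℤ) : ℝ) * lam ^ k) n]
    apply Finset.sum_congr rfl
    intro j _
    rw [hcast j]
    ring
  rw [hgoal_eq, ← hD, abs_mul, abs_of_pos (pow_pos hl0 (n - 1))]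
  have hstep : c ^ d / (2 * lam) ^ n ≤ |Polynomial.aeval β R| := by
    rw [← hφ0xval]; exact hφ0x
  calc c ^ d / 2 ^ n ≤ lam ^ (n - 1) * (c ^ d / (2 * lam) ^ n) := by
        rw [mul_pow]
        rw [show lam ^ (n - 1) * (c ^ d / (2 ^ n * lam ^ n)) = c ^ d / (2 ^ n * lam) from by
          rw [show lam ^ n = lam ^ (n - 1) * lam from by rw [← pow_succ]; congr 1; omega]
          field_simp]
        apply div_le_div_of_nonneg_left hcd.le (by positivity)
        nlinarith [pow_pos (show (0:ℝ) < 2 by norm_num) n]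
    _ ≤ lam ^ (n - 1) * |Polynomial.aeval β R| :=
        mul_le_mul_of_nonneg_left hstep (pow_nonneg hl0.le _)
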